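/- WProj(FdHilb) contains no nontrivial global phases: let H₁ and H₂ be finite-dimensional complex inner product spaces, let f, g : H₁ →ₗ[ℂ] H₂ be linear maps, and let z : ℂ with ‖z‖ = 1. If TensorProduct.map f (LinearMap.adjoint f) = z • TensorProduct.map g (LinearMap.adjoint g), then TensorProduct.map f (LinearMap.adjoint f) = TensorProduct.map g (LinearMap.adjoint g). -/

import Mathlib

open scoped InnerProductSpace TensorProduct

theorem stmt_15 {H₁ H₂ : Type*}
    [NormedAddCommGroup H₁] [InnerProductSpace ℂ H₁] [FiniteDimensional ℂ H₁]
    [NormedAddCommGroup H₂] [InnerProductSpace ℂ H₂] [FiniteDimensional ℂ H₂]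
    (f g : H₁ →ₗ[ℂ] H₂) (z : ℂ) (hz : ‖z‖ = 1)
    (h : TensorProduct.map f (LinearMap.adjoint f) =
      z • TensorProduct.map g (LinearMap.adjoint g)) :
    TensorProduct.map f (LinearMap.adjoint f) =
      TensorProduct.map g (LinearMap.adjoint g) := by
  have hz0 : z ≠ 0 := by
    intro h0; rw [h0, norm_zero] at hz; norm_num at hz
  by_cases hf : f = 0
  · have h0 : (0 : H₁ ⊗[ℂ] H₂ →ₗ[ℂ] H₂ ⊗[ℂ] H₁) = z • TensorProduct.map g (LinearMap.adjoint g) := by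
      rw [← h, hf]
      ext x y
      simp
    have hM : TensorProduct.map g (LinearMap.adjoint g) = 0 :=
      (smul_eq_zero.mp h0.symm).resolve_left hz0
    rw [hM, hf]
    ext x y
    simp
  · obtain ⟨x, hx⟩ : ∃ x, f x ≠ 0 := by
      by_contra hc
      push_neg at hc
      exact hf (LinearMap.ext fun x => by simpa using hc x)
    have hx' : (0:ℝ) < ‖f x‖ := norm_pos_iff.mpr hx
    have key := LinearMap.congr_fun h (x ⊗ₜ[ℂ] (f x))
    simp only [TensorProduct.map_tmul, LinearMap.smul_apply] at key
    set F : H₂ ⊗[ℂ] H₁ →ₗ[ℂ] ℂ :=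
      LinearMap.mul' ℂ ℂ ∘ₗ TensorProduct.map (innerSL ℂ (f x)).toLinearMap (innerSL ℂ x).toLinearMap with hF
    have hFt : ∀ (a : H₂) (b : H₁), F (a ⊗ₜ[ℂ] b) = ⟪f x, a⟫_ℂ * ⟪x, b⟫_ℂ := by
      intro a b; simp [hF]
    have keyF := congrArg F key
    rw [map_smul] at keyF
    rw [hFt, hFt] at keyF
    rw [LinearMap.adjoint_inner_right, LinearMap.adjoint_inner_right] at keyF
    set c : ℂ := ⟪g x, f x⟫_ℂ with hc
    have h1 : ⟪f x, g x⟫_ℂ = starRingEnd ℂ c := by rw [hc, inner_conj_symm]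
    rw [h1] at keyF
    have h3 : (starRingEnd ℂ) c * c = ((Complex.normSq c : ℝ) : ℂ) := by
      rw [Complex.normSq_eq_conj_mul_self]
    rw [smul_eq_mul, h3] at keyF
    have h2 : ⟪f x, f x⟫_ℂ = ((‖f x‖^2 : ℝ) : ℂ) := by
      rw [inner_self_eq_norm_sq_to_K]; norm_cast
    rw [h2] at keyF
    set s : ℝ := Complex.normSq c with hs
    have keyF' : ((‖f x‖^2 * ‖f x‖^2 : ℝ) : ℂ) = z * (s : ℂ) := by
      rw [Complex.ofReal_mul]; exact keyF
    rw [Complex.ext_iff] at keyF'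
    obtain ⟨hre, him⟩ := keyF'
    simp only [Complex.mul_re, Complex.mul_im, Complex.ofReal_re, Complex.ofReal_im,
      mul_zero, zero_mul, sub_zero, add_zero, zero_add] at hre him
    -- hre : ‖f x‖^2 * ‖f x‖^2 = z.re * s, him : 0 = z.im * s
    have hsnn : 0 ≤ s := hs ▸ Complex.normSq_nonneg c
    have hsne : s ≠ 0 := by
      intro h0
      rw [h0, mul_zero] at hre
      nlinarith [pow_pos hx' 2]
    have hspos : 0 < s := lt_of_le_of_ne hsnn (Ne.symm hsne)
    have him0 : z.im = 0 := by
      rcases mul_eq_zero.mp him.symm with h' | h'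
      · exact h'
      · exact absurd h' hsne
    have hrepos : 0 < z.re := by
      have hp : 0 < z.re * s := by
        rw [← hre]; positivity
      rcases mul_pos_iff.mp hp with h' | h'
      · exact h'.1
      · exact absurd hspos (not_lt.mpr h'.2.le)
    have h4 : z.re * z.re + z.im * z.im = 1 := by
      have h6 := Complex.sq_norm z
      rw [hz, Complex.normSq_apply] at h6
      simpa using h6.symm
    have h4' : z.re * z.re = 1 := by
      rw [him0] at h4; linarith
    have hre1 : z.re = 1 := by
      rcases mul_self_eq_one_iff.mp h4' with h' | h'
      · exact h'
      · exfalso; rw [h'] at hrepos; linarith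
    have hz1 : z = 1 := by
      apply Complex.ext <;> simp [hre1, him0]
    rw [hz1, one_smul] at h
    exact h
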